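/- Let β be a set of ordered pairs of distinct items from {1,…,n} (directed comparison edges) and let i ≠ i' be two items that are topologically identical under β: neither (i,i') nor (i',i) belongs to β, and for every other item ℓ, (i,ℓ) ∈ β ⇔ (i',ℓ) ∈ β and (ℓ,i) ∈ β ⇔ (ℓ,i') ∈ β. Then the operation of exchanging the ranks of items i and i' is a bijection from the set of permutations consistent with β that rank i above i' onto the set of permutations consistent with β that rank i' above i. Consequently these two sets have equal cardinality, and exactly half of all permutations consistent with β rank i above i'. -/
import Mathlib


/- STATEMENT 13: Let `i ≠ i'` be topologically identical under `β`: neither `(i,i')` nor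
`(i',i)` is in `β`, and they have identical comparisons, with identical outcomes, against
every other item. Then exchanging the ranks of `i` and `i'` is a bijection from the set of
permutations consistent with `β` ranking `i` above `i'` onto those ranking `i'` above `i`;
these two sets have equal cardinality, and exactly half of all permutations consistent with
`β` rank `i` above `i'`. -/
theorem topologically_identical_pair_halves
    (n : ℕ) (β : Set (Fin n × Fin n)) (i i' : Fin n) (hii : i ≠ i')
    (h1 : (i, i') ∉ β) (h2 : (i', i) ∉ β)
    (h3 : ∀ l : Fin n, l ≠ i → l ≠ i' →
      (((i, l) ∈ β ↔ (i', l) ∈ β) ∧ ((l, i) ∈ β ↔ (l, i') ∈ β))) :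
    Set.BijOn (fun σ : Equiv.Perm (Fin n) => (Equiv.swap i i').trans σ)
      {σ : Equiv.Perm (Fin n) | (∀ p ∈ β, σ p.1 < σ p.2) ∧ σ i < σ i'}
      {σ : Equiv.Perm (Fin n) | (∀ p ∈ β, σ p.1 < σ p.2) ∧ σ i' < σ i} ∧
    Set.ncard {σ : Equiv.Perm (Fin n) | (∀ p ∈ β, σ p.1 < σ p.2) ∧ σ i < σ i'}
      = Set.ncard {σ : Equiv.Perm (Fin n) | (∀ p ∈ β, σ p.1 < σ p.2) ∧ σ i' < σ i} ∧
    2 * Set.ncard {σ : Equiv.Perm (Fin n) | (∀ p ∈ β, σ p.1 < σ p.2) ∧ σ i < σ i'}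
      = Set.ncard {σ : Equiv.Perm (Fin n) | ∀ p ∈ β, σ p.1 < σ p.2} := by
  set A := {σ : Equiv.Perm (Fin n) | (∀ p ∈ β, σ p.1 < σ p.2) ∧ σ i < σ i'} with hA
  set B := {σ : Equiv.Perm (Fin n) | (∀ p ∈ β, σ p.1 < σ p.2) ∧ σ i' < σ i} with hB
  set S := {σ : Equiv.Perm (Fin n) | ∀ p ∈ β, σ p.1 < σ p.2} with hS
  -- key: swapping preserves consistency
  have key : ∀ σ : Equiv.Perm (Fin n), (∀ p ∈ β, σ p.1 < σ p.2) →
      ∀ p ∈ β, σ (Equiv.swap i i' p.1) < σ (Equiv.swap i i' p.2) := by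
    intro σ hσ p hp
    obtain ⟨a, b⟩ := p
    rcases eq_or_ne i a with rfl | hai
    · rcases eq_or_ne i b with rfl | hbi
      · exact absurd (hσ _ hp) (lt_irrefl _)
      rcases eq_or_ne i' b with rfl | hbi'
      · exact absurd hp h1
      · rw [Equiv.swap_apply_left, Equiv.swap_apply_of_ne_of_ne hbi.symm hbi'.symm]
        exact hσ (i', b) (((h3 b hbi.symm hbi'.symm).1).mp hp)
    rcases eq_or_ne i' a with rfl | hai'
    · rcases eq_or_ne i b with rfl | hbi
      · exact absurd hp h2
      rcases eq_or_ne i' b with rfl | hbi'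
      · exact absurd (hσ _ hp) (lt_irrefl _)
      · rw [Equiv.swap_apply_right, Equiv.swap_apply_of_ne_of_ne hbi.symm hbi'.symm]
        exact hσ (i, b) (((h3 b hbi.symm hbi'.symm).1).mpr hp)
    rcases eq_or_ne i b with rfl | hbi
    · rw [Equiv.swap_apply_left, Equiv.swap_apply_of_ne_of_ne hai.symm hai'.symm]
      exact hσ (a, i') (((h3 a hai.symm hai'.symm).2).mp hp)
    rcases eq_or_ne i' b with rfl | hbi'
    · rw [Equiv.swap_apply_right, Equiv.swap_apply_of_ne_of_ne hai.symm hai'.symm]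
      exact hσ (a, i) (((h3 a hai.symm hai'.symm).2).mpr hp)
    · rw [Equiv.swap_apply_of_ne_of_ne hai.symm hai'.symm,
        Equiv.swap_apply_of_ne_of_ne hbi.symm hbi'.symm]
      exact hσ (a, b) hp
  have hbij : Set.BijOn (fun σ : Equiv.Perm (Fin n) => (Equiv.swap i i').trans σ) A B := by
    refine ⟨?_, ?_, ?_⟩
    · intro σ ⟨hcons, hlt⟩
      refine ⟨key σ hcons, ?_⟩
      simp [Equiv.trans_apply, Equiv.swap_apply_left, Equiv.swap_apply_right, hlt]
    · intro σ _ τ _ h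
      have := congrArg (fun e => (Equiv.swap i i').trans e) h
      simpa [← Equiv.trans_assoc, Equiv.swap_swap] using this
    · intro τ ⟨hcons, hlt⟩
      refine ⟨(Equiv.swap i i').trans τ, ⟨key τ hcons, ?_⟩, ?_⟩
      · simp [Equiv.trans_apply, Equiv.swap_apply_left, Equiv.swap_apply_right, hlt]
      · simp [← Equiv.trans_assoc, Equiv.swap_swap]
  refine ⟨hbij, ?_, ?_⟩
  · rw [← hbij.image_eq, Set.ncard_image_of_injOn hbij.injOn]
  · have hAB : Set.ncard A = Set.ncard B := by
      rw [← hbij.image_eq, Set.ncard_image_of_injOn hbij.injOn]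
    have hunion : S = A ∪ B := by
      ext σ
      simp only [hA, hB, hS, Set.mem_setOf_eq, Set.mem_union]
      constructor
      · intro h
        have : σ i ≠ σ i' := fun he => hii (σ.injective he)
        rcases this.lt_or_gt with hl | hl
        · exact Or.inl ⟨h, hl⟩
        · exact Or.inr ⟨h, hl⟩
      · rintro (⟨h, _⟩ | ⟨h, _⟩) <;> exact h
    have hdisj : Disjoint A B := by
      rw [Set.disjoint_left]
      rintro σ ⟨_, h1'⟩ ⟨_, h2'⟩
      exact absurd (h1'.trans h2') (lt_irrefl _)
    rw [hunion, Set.ncard_union_eq hdisj (Set.toFinite A) (Set.toFinite B), hAB, two_mul]
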